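/- Regard F(x;β) as a function of both x and β. For every x ∈ [0,1]^n and every index i, the partial derivative ∂F_i(x;β)/∂β is nonnegative; consequently, if 0 < β₁ ≤ β₂ < 1, then F(x;β₁) ⪯ F(x;β₂) componentwise for every x ∈ [0,1]^n. -/

import Mathlib

open Filter Finset

/-- The MMCA map `F`. -/
noncomputable def F {n : ℕ} (R : Matrix (Fin n) (Fin n) ℝ) (β μ : ℝ) (x : Fin n → ℝ) :
    Fin n → ℝ :=
  fun i => 1 - (1 - (1 - μ) * x i) * ∏ j, (1 - β * R i j * x j)

/-- Irreducibility of a (nonnegative) square matrix. -/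
def MatIrred {n : ℕ} (R : Matrix (Fin n) (Fin n) ℝ) : Prop :=
  ∀ i j : Fin n, ∃ k : ℕ, 0 < k ∧ (R ^ k) i j ≠ 0

/-- Spectral radius of a real matrix, as the supremum of the absolute values of the
real spectrum (appropriate here since `R` is symmetric). -/
noncomputable def specRad {n : ℕ} (R : Matrix (Fin n) (Fin n) ℝ) : ℝ :=
  sSup {r : ℝ | ∃ z ∈ spectrum ℝ R, |z| = r}

theorem monotone_in_beta (n : ℕ) (hn : 2 ≤ n) (R : Matrix (Fin n) (Fin n) ℝ)
    (hsymm : R.IsSymm) (hR : ∀ i j, R i j ∈ Set.Icc (0:ℝ) 1)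
    (hdiag : ∀ i, R i i = 0) (hirr : MatIrred R)
    (μ : ℝ) (hμ : μ ∈ Set.Ioo (0:ℝ) 1) :
    (∀ β : ℝ, β ∈ Set.Ioo (0:ℝ) 1 →
      ∀ x : Fin n → ℝ, (∀ i, x i ∈ Set.Icc (0:ℝ) 1) →
        ∀ i, 0 ≤ deriv (fun b => F R b μ x i) β) ∧
    (∀ β₁ β₂ : ℝ, 0 < β₁ → β₁ ≤ β₂ → β₂ < 1 →
      ∀ x : Fin n → ℝ, (∀ i, x i ∈ Set.Icc (0:ℝ) 1) →
        ∀ i, F R β₁ μ x i ≤ F R β₂ μ x i) := by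
  have key : ∀ (x : Fin n → ℝ), (∀ i, x i ∈ Set.Icc (0:ℝ) 1) → ∀ (i : Fin n) (j : Fin n),
      0 ≤ R i j * x j ∧ R i j * x j ≤ 1 := by
    intro x hx i j
    constructor
    · exact mul_nonneg (hR i j).1 (hx j).1
    · exact mul_le_one₀ (hR i j).2 (hx j).1 (hx j).2
  constructor
  · intro β hβ x hx i
    set c : Fin n → ℝ := fun j => R i j * x j with hc
    have hA : (0:ℝ) ≤ 1 - (1 - μ) * x i := by
      have h1 : (1 - μ) * x i ≤ 1 :=
        mul_le_one₀ (by linarith [hμ.1]) (hx i).1 (hx i).2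
      linarith
    have hderiv : ∀ j : Fin n, HasDerivAt (fun b : ℝ => 1 - b * R i j * x j) (-(c j)) β := by
      intro j
      have : HasDerivAt (fun b : ℝ => 1 - b * (R i j * x j)) (0 - 1 * (R i j * x j)) β := by
        exact (hasDerivAt_const β (1:ℝ)).sub ((hasDerivAt_id β).mul_const (R i j * x j))
      simpa [hc, mul_assoc] using this
    have hprod : HasDerivAt (fun b : ℝ => ∏ j, (1 - b * R i j * x j))
        (∑ j, (∏ k ∈ Finset.univ.erase j, (1 - β * R i k * x k)) • (-(c j))) β :=
      HasDerivAt.fun_finsetProd (fun j _ => hderiv j)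
    have hF : HasDerivAt (fun b => F R b μ x i)
        ((1 - (1 - μ) * x i) * ∑ j, (∏ k ∈ Finset.univ.erase j, (1 - β * R i k * x k)) * c j)
        β := by
      have h := (hprod.const_mul (1 - (1 - μ) * x i)).const_sub 1
      have heq : -((1 - (1 - μ) * x i) *
          ∑ j, (∏ k ∈ Finset.univ.erase j, (1 - β * R i k * x k)) • (-(c j))) =
          (1 - (1 - μ) * x i) *
            ∑ j, (∏ k ∈ Finset.univ.erase j, (1 - β * R i k * x k)) * c j := by
        simp only [smul_eq_mul, mul_neg, Finset.sum_neg_distrib, neg_neg]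
      rw [heq] at h
      exact h
    rw [hF.deriv]
    apply mul_nonneg hA
    apply Finset.sum_nonneg
    intro j _
    apply mul_nonneg
    · apply Finset.prod_nonneg
      intro k _
      have := (key x hx i k).2
      nlinarith [hβ.2, (key x hx i k).1, hβ.1]
    · exact (key x hx i j).1
  · intro β₁ β₂ h1 h12 h2 x hx i
    have hA : (0:ℝ) ≤ 1 - (1 - μ) * x i := by
      have : (1 - μ) * x i ≤ 1 :=
        mul_le_one₀ (by linarith [hμ.1]) (hx i).1 (hx i).2
      linarith
    unfold F
    have hprod : ∏ j, (1 - β₂ * R i j * x j) ≤ ∏ j, (1 - β₁ * R i j * x j) := by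
      apply Finset.prod_le_prod
      · intro j _
        have := (key x hx i j).2
        nlinarith [(key x hx i j).1]
      · intro j _
        have := (key x hx i j).1
        nlinarith
    nlinarith
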